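/- Let U ∈ Mat(d×R) with orthonormal columns (UᵀU = I_R), Π_U = UUᵀ, Π_U^⊥ = I - Π_U, and Σ a d×d positive semidefinite matrix with ‖Π_U^⊥ Σ^{1/2}‖_F < ε. Then ‖Σ - Π_U Σ Π_U‖_F² ≤ 2 λ_max(Σ) ε². -/

import Mathlib

set_option maxHeartbeats 1000000

open Matrix

section

open scoped ComplexOrder

/-- The positive semidefinite square root of a positive semidefinite matrix (as defined in
Mathlib of December 2024; removed from current Mathlib). -/
noncomputable def Matrix.PosSemidef.sqrt {n 𝕜 : Type*} [Fintype n] [RCLike 𝕜] [DecidableEq n]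
    {A : Matrix n n 𝕜} (hA : A.PosSemidef) : Matrix n n 𝕜 :=
  hA.1.eigenvectorUnitary.1 * diagonal ((↑) ∘ Real.sqrt ∘ hA.1.eigenvalues) *
  (star hA.1.eigenvectorUnitary : Matrix n n 𝕜)

end

open scoped ComplexOrder in
lemma Matrix.PosSemidef.posSemidef_sqrt {n 𝕜 : Type*} [Fintype n] [RCLike 𝕜] [DecidableEq n]
    {A : Matrix n n 𝕜} (hA : A.PosSemidef) : hA.sqrt.PosSemidef := by
  have hd : (diagonal (((↑) ∘ Real.sqrt ∘ hA.1.eigenvalues) : n → 𝕜)).PosSemidef := by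
    refine Matrix.posSemidef_diagonal_iff.mpr fun i => ?_
    simp only [Function.comp]
    exact_mod_cast Real.sqrt_nonneg _
  exact hd.mul_mul_conjTranspose_same _

open scoped ComplexOrder in
lemma Matrix.PosSemidef.sqrt_mul_self {n 𝕜 : Type*} [Fintype n] [RCLike 𝕜] [DecidableEq n]
    {A : Matrix n n 𝕜} (hA : A.PosSemidef) : hA.sqrt * hA.sqrt = A := by
  have hVV : (star hA.1.eigenvectorUnitary : Matrix n n 𝕜) * hA.1.eigenvectorUnitary.1 = 1 :=
    Unitary.star_mul_self_of_mem hA.1.eigenvectorUnitary.2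
  have hspec : A = hA.1.eigenvectorUnitary.1 * diagonal (RCLike.ofReal ∘ hA.1.eigenvalues) *
      (star hA.1.eigenvectorUnitary : Matrix n n 𝕜) := hA.1.spectral_theorem
  have hDD : diagonal (((↑) ∘ Real.sqrt ∘ hA.1.eigenvalues) : n → 𝕜) *
      diagonal (((↑) ∘ Real.sqrt ∘ hA.1.eigenvalues) : n → 𝕜) =
      diagonal (RCLike.ofReal ∘ hA.1.eigenvalues) := by
    rw [diagonal_mul_diagonal]
    congr 1
    funext i
    simp only [Function.comp]
    rw [← RCLike.ofReal_mul, Real.mul_self_sqrt (hA.eigenvalues_nonneg i)]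
  conv_rhs => rw [hspec]
  unfold Matrix.PosSemidef.sqrt
  calc _ = hA.1.eigenvectorUnitary.1 * diagonal (((↑) ∘ Real.sqrt ∘ hA.1.eigenvalues) : n → 𝕜) *
      ((star hA.1.eigenvectorUnitary : Matrix n n 𝕜) * hA.1.eigenvectorUnitary.1) *
      diagonal (((↑) ∘ Real.sqrt ∘ hA.1.eigenvalues) : n → 𝕜) *
      (star hA.1.eigenvectorUnitary : Matrix n n 𝕜) := by simp only [Matrix.mul_assoc]
    _ = _ := by rw [hVV, Matrix.mul_one, Matrix.mul_assoc _ (diagonal _) (diagonal _), hDD]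

lemma my_trace_tmul_nonneg {d : ℕ} (A : Matrix (Fin d) (Fin d) ℝ) :
    0 ≤ Matrix.trace (Aᵀ * A) := by
  rw [Matrix.trace]
  refine Finset.sum_nonneg fun i _ => ?_
  simp only [Matrix.diag_apply, Matrix.mul_apply, Matrix.transpose_apply]
  exact Finset.sum_nonneg fun j _ => mul_self_nonneg _

lemma my_psd_trace_nonneg {d : ℕ} {A : Matrix (Fin d) (Fin d) ℝ} (hA : A.PosSemidef) :
    0 ≤ A.trace := by
  have h := hA.sqrt_mul_self
  have ht : hA.sqrtᵀ = hA.sqrt := by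
    rw [← Matrix.conjTranspose_eq_transpose_of_trivial]; exact hA.posSemidef_sqrt.1
  calc (0:ℝ) ≤ Matrix.trace (hA.sqrtᵀ * hA.sqrt) := my_trace_tmul_nonneg _
    _ = A.trace := by rw [ht, h]

lemma my_trace_mul_psd_nonneg {d : ℕ} {A B : Matrix (Fin d) (Fin d) ℝ}
    (hA : A.PosSemidef) (hB : B.PosSemidef) : 0 ≤ (A * B).trace := by
  have h := hA.sqrt_mul_self
  have hs : hA.sqrtᴴ = hA.sqrt := hA.posSemidef_sqrt.1
  have h2 : hA.sqrt * hA.sqrt * B = A * B := by rw [h]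
  have e : (A * B).trace = (hA.sqrt * B * hA.sqrtᴴ).trace := by
    rw [hs, ← h2, Matrix.mul_assoc, Matrix.trace_mul_comm, Matrix.mul_assoc]
  rw [e]
  exact my_psd_trace_nonneg (hB.mul_mul_conjTranspose_same _)

lemma my_smul_one_sub_psd {d : ℕ} {A : Matrix (Fin d) (Fin d) ℝ} (hA : A.PosSemidef) :
    ((⨆ i, hA.1.eigenvalues i) • (1 : Matrix (Fin d) (Fin d) ℝ) - A).PosSemidef := by
  set lam : ℝ := ⨆ i, hA.1.eigenvalues i with hlam
  have hspec : A = (hA.1.eigenvectorUnitary : Matrix (Fin d) (Fin d) ℝ) * Matrix.diagonal (RCLike.ofReal ∘ hA.1.eigenvalues) * star (hA.1.eigenvectorUnitary : Matrix (Fin d) (Fin d) ℝ) := hA.1.spectral_theorem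
  set V : Matrix (Fin d) (Fin d) ℝ := (hA.1.eigenvectorUnitary : Matrix (Fin d) (Fin d) ℝ)
    with hV
  have hVV : V * star V = 1 := (Matrix.mem_unitaryGroup_iff).mp hA.1.eigenvectorUnitary.2
  have h1 : lam • (1 : Matrix (Fin d) (Fin d) ℝ) = V * (lam • 1) * star V := by
    rw [Matrix.mul_smul, Matrix.smul_mul, Matrix.mul_one, hVV]
  have key : lam • (1 : Matrix (Fin d) (Fin d) ℝ) - A
      = V * Matrix.diagonal (fun i => lam - hA.1.eigenvalues i) * (star V) := by
    calc lam • (1 : Matrix (Fin d) (Fin d) ℝ) - A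
        = V * (lam • 1) * star V
          - V * Matrix.diagonal (RCLike.ofReal ∘ hA.1.eigenvalues) * star V := by
          rw [← h1, ← hspec]
      _ = V * ((lam • 1) - Matrix.diagonal (RCLike.ofReal ∘ hA.1.eigenvalues)) * star V := by
          rw [Matrix.mul_sub, Matrix.sub_mul]
      _ = V * Matrix.diagonal (fun i => lam - hA.1.eigenvalues i) * (star V) := by
          congr 2
          ext i j
          by_cases hij : i = j <;>
            simp [Matrix.diagonal, Matrix.one_apply, hij, Matrix.smul_apply, Function.comp]
  rw [key]
  have hdiag : (Matrix.diagonal (fun i => lam - hA.1.eigenvalues i)).PosSemidef := by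
    refine Matrix.posSemidef_diagonal_iff.mpr fun i => ?_
    have : hA.1.eigenvalues i ≤ lam :=
      le_ciSup (Set.Finite.bddAbove (Set.finite_range _)) i
    linarith
  have := hdiag.mul_mul_conjTranspose_same V
  rwa [show Vᴴ = star V from rfl] at this

/-- If `U` has orthonormal columns, `Π_U = U Uᵀ`, `Π_U^⊥ = 1 - Π_U`, and
`‖Π_U^⊥ Sigma^{1/2}‖_F < ε`, then `‖Sigma - Pi Sigma Pi‖_F² ≤ 2 lambda_max(Sigma) ε²`. -/
theorem sigma_projection_error_bound {d R : ℕ}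
    (U : Matrix (Fin d) (Fin R) ℝ) (hU : Uᵀ * U = 1)
    (Sig : Matrix (Fin d) (Fin d) ℝ) (hSig : Sig.PosSemidef) (ε : ℝ)
    (hε : Real.sqrt (Matrix.trace
        ((((1 : Matrix (Fin d) (Fin d) ℝ) - U * Uᵀ) * hSig.sqrt)ᵀ *
          (((1 : Matrix (Fin d) (Fin d) ℝ) - U * Uᵀ) * hSig.sqrt))) < ε) :
    Matrix.trace ((Sig - (U * Uᵀ) * Sig * (U * Uᵀ))ᵀ *
        (Sig - (U * Uᵀ) * Sig * (U * Uᵀ))) ≤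
      2 * (⨆ i, hSig.1.eigenvalues i) * ε ^ 2 := by
  set S := hSig.sqrt with hSdef
  set P : Matrix (Fin d) (Fin d) ℝ := U * Uᵀ with hPdef
  set Q : Matrix (Fin d) (Fin d) ℝ := 1 - P with hQdef
  set lam : ℝ := ⨆ i, hSig.1.eigenvalues i with hlamdef
  have hSt : Sᵀ = S := by
    rw [← Matrix.conjTranspose_eq_transpose_of_trivial]; exact hSig.posSemidef_sqrt.1
  have hSS : S * S = Sig := hSig.sqrt_mul_self
  have hSigt : Sigᵀ = Sig := by
    rw [← Matrix.conjTranspose_eq_transpose_of_trivial]; exact hSig.1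
  have hPt : Pᵀ = P := by
    rw [hPdef, Matrix.transpose_mul, Matrix.transpose_transpose]
  have hPP : P * P = P := by
    rw [hPdef, Matrix.mul_assoc, ← Matrix.mul_assoc Uᵀ U Uᵀ, hU, Matrix.one_mul]
  have hQt : Qᵀ = Q := by rw [hQdef, Matrix.transpose_sub, Matrix.transpose_one, hPt]
  have hQQ : Q * Q = Q := by
    rw [hQdef]
    simp only [Matrix.sub_mul, Matrix.mul_sub, Matrix.one_mul, Matrix.mul_one, hPP]
    abel
  have hQP : Q * P = 0 := by
    rw [hQdef, Matrix.sub_mul, Matrix.one_mul, hPP, sub_self]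
  have hQpsd : Q.PosSemidef := by
    have e : Q = Qᴴ * Q := by
      rw [Matrix.conjTranspose_eq_transpose_of_trivial, hQt, hQQ]
    rw [e]; exact Matrix.posSemidef_conjTranspose_mul_self Q
  have hPpsd : P.PosSemidef := by
    have e : P = Pᴴ * P := by
      rw [Matrix.conjTranspose_eq_transpose_of_trivial, hPt, hPP]
    rw [e]; exact Matrix.posSemidef_conjTranspose_mul_self P
  have hSh : Sᴴ = S := hSig.posSemidef_sqrt.1
  have hSQS : (S * Q * S).PosSemidef := by
    have h := hQpsd.mul_mul_conjTranspose_same S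
    rwa [hSh] at h
  have hSPS : (S * P * S).PosSemidef := by
    have h := hPpsd.mul_mul_conjTranspose_same S
    rwa [hSh] at h
  have hlamSig : (lam • (1 : Matrix (Fin d) (Fin d) ℝ) - Sig).PosSemidef :=
    my_smul_one_sub_psd hSig
  have hlam0 : 0 ≤ lam := Real.iSup_nonneg fun i => hSig.eigenvalues_nonneg i
  -- the matrix identity
  have hM : Sig - P * Sig * P = Q * Sig + P * Sig * Q := by
    rw [hQdef, Matrix.sub_mul, Matrix.one_mul, Matrix.mul_sub, Matrix.mul_one]
    abel
  have hMt : (Sig - P * Sig * P)ᵀ = Sig - P * Sig * P := by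
    rw [Matrix.transpose_sub, hSigt, Matrix.transpose_mul (P * Sig) P,
      Matrix.transpose_mul P Sig, hPt, hSigt, ← Matrix.mul_assoc]
  have hQPl : ∀ X : Matrix (Fin d) (Fin d) ℝ, Q * (P * X) = 0 := fun X => by
    rw [← Matrix.mul_assoc, hQP, Matrix.zero_mul]
  have hQQl : ∀ X : Matrix (Fin d) (Fin d) ℝ, Q * (Q * X) = Q * X := fun X => by
    rw [← Matrix.mul_assoc, hQQ]
  have hsum : ∀ X : Matrix (Fin d) (Fin d) ℝ, Q * X + P * X = X := fun X => by
    rw [hQdef, Matrix.sub_mul, Matrix.one_mul]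
    abel
  have hexp : (Sig - P * Sig * P)ᵀ * (Sig - P * Sig * P)
      = Sig * Q * Sig + Q * Sig * P * Sig * Q := by
    rw [hMt, hM]
    simp only [Matrix.add_mul, Matrix.mul_add, Matrix.mul_assoc, hQPl, hQQl,
      Matrix.mul_zero, Matrix.zero_mul, add_zero, zero_add]
    rw [hsum]
  rw [hexp, Matrix.trace_add]
  -- trace identities
  have t1 : Matrix.trace (Sig * Q * Sig) = Matrix.trace ((S * Q * S) * Sig) := by
    rw [← hSS]
    have s1 : S * S * Q * (S * S) = S * (S * (Q * (S * S))) := by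
      simp only [Matrix.mul_assoc]
    rw [s1, Matrix.trace_mul_comm]
    exact congrArg Matrix.trace (by simp only [Matrix.mul_assoc])
  have t2 : Matrix.trace (Q * Sig * P * Sig * Q)
      = Matrix.trace ((S * Q * S) * (S * P * S)) := by
    rw [← hSS]
    have s1 : Q * (S * S) * P * (S * S) * Q = Q * (S * (S * (P * (S * (S * Q))))) := by
      simp only [Matrix.mul_assoc]
    rw [s1, Matrix.trace_mul_comm]
    have s2 : S * (S * (P * (S * (S * Q)))) * Q = S * (S * (P * (S * (S * (Q * Q))))) := by
      simp only [Matrix.mul_assoc]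
    rw [s2, hQQ, Matrix.trace_mul_comm]
    have s3 : S * (P * (S * (S * Q))) * S = S * (P * (S * (S * (Q * S)))) := by
      simp only [Matrix.mul_assoc]
    rw [s3, Matrix.trace_mul_comm]
    have s4 : P * (S * (S * (Q * S))) * S = P * (S * (S * (Q * (S * S)))) := by
      simp only [Matrix.mul_assoc]
    rw [s4, Matrix.trace_mul_comm]
    have s5 : S * (S * (Q * (S * S))) * P = S * (S * (Q * (S * (S * P)))) := by
      simp only [Matrix.mul_assoc]
    rw [s5, Matrix.trace_mul_comm]
    exact congrArg Matrix.trace (by simp only [Matrix.mul_assoc])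
  -- the two inequalities
  have trQS0 : 0 ≤ Matrix.trace (S * Q * S) := my_psd_trace_nonneg hSQS
  have i1 : Matrix.trace ((S * Q * S) * Sig) ≤ lam * Matrix.trace (S * Q * S) := by
    have h := my_trace_mul_psd_nonneg hSQS hlamSig
    rw [Matrix.mul_sub, Matrix.trace_sub, Matrix.mul_smul, Matrix.mul_one,
      Matrix.trace_smul, smul_eq_mul] at h
    linarith
  have i2 : Matrix.trace ((S * Q * S) * (S * P * S)) ≤ lam * Matrix.trace (S * Q * S) := by
    have hsplit : S * P * S + S * Q * S = Sig := by
      rw [← hSS]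
      have e : S * P * S + S * Q * S = S * ((P + Q) * S) := by
        rw [Matrix.add_mul, Matrix.mul_add, Matrix.mul_assoc S P S, Matrix.mul_assoc S Q S]
      rw [e, hQdef, add_sub_cancel, Matrix.one_mul]
    have hps : (lam • (1 : Matrix (Fin d) (Fin d) ℝ) - S * P * S).PosSemidef := by
      have e : lam • (1 : Matrix (Fin d) (Fin d) ℝ) - S * P * S
          = (lam • 1 - Sig) + S * Q * S := by
        rw [← hsplit]
        abel
      rw [e]
      exact hlamSig.add hSQS
    have h := my_trace_mul_psd_nonneg hSQS hps
    rw [Matrix.mul_sub, Matrix.trace_sub, Matrix.mul_smul, Matrix.mul_one,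
      Matrix.trace_smul, smul_eq_mul] at h
    linarith
  -- bound from hε
  have tQS : (Q * S)ᵀ * (Q * S) = S * Q * S := by
    rw [Matrix.transpose_mul, hSt, hQt, Matrix.mul_assoc, ← Matrix.mul_assoc Q Q S, hQQ,
      ← Matrix.mul_assoc]
  have htr : Matrix.trace (S * Q * S) < ε ^ 2 := by
    have h := Real.lt_sq_of_sqrt_lt hε
    rwa [tQS] at h
  rw [t1, t2]
  nlinarith [i1, i2, htr, hlam0, trQS0]
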